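/- For every natural number n ≥ 1, twice the number ℓ(D_n) of covering pairs in the Dyck lattice D_n equals (n−1) times the n-th Catalan number C_n; in other words the Hasse index of D_n is exactly (n−1)/2. -/

import Mathlib

/-- Steps of a (Grand) Dyck path: up `U = (1,1)` and down `D = (1,-1)`. -/
inductive Step : Type
  | U : Step
  | D : Step
  deriving DecidableEq

/-- The height of a path: number of up steps minus number of down steps. -/
def height (w : List Step) : ℤ := (w.count Step.U : ℤ) - (w.count Step.D : ℤ)

/-- A Dyck path of semilength `n`: a word of length `2n` with `n` up steps
(hence `n` down steps) all of whose prefixes have nonnegative height. -/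
def IsDyck (n : ℕ) (w : List Step) : Prop :=
  w.length = 2 * n ∧ w.count Step.U = n ∧ ∀ i : ℕ, 0 ≤ height (w.take i)

/-- A Grand Dyck path of semilength `n`: a word of length `2n` with `n` up steps. -/
def IsGrandDyck (n : ℕ) (w : List Step) : Prop :=
  w.length = 2 * n ∧ w.count Step.U = n

/-- The order on paths: pointwise comparison of the heights after each number of steps. -/
def PathLe (w w' : List Step) : Prop :=
  ∀ i : ℕ, height (w.take i) ≤ height (w'.take i)

/-- Strict order on paths. -/
def PathLt (w w' : List Step) : Prop := PathLe w w' ∧ ¬ PathLe w' w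

/-- `Covers P w w'` : within the class of paths satisfying `P`, the path `w'` covers `w`,
i.e. `w < w'` and no path of the class lies strictly between them. -/
def Covers (P : List Step → Prop) (w w' : List Step) : Prop :=
  P w ∧ P w' ∧ PathLt w w' ∧ ∀ z : List Step, P z → ¬ (PathLt w z ∧ PathLt z w')

/-- Number of occurrences of the factor `xy` in the word `w`. -/
def countFactor (x y : Step) (w : List Step) : ℕ :=
  ((Finset.range w.length).filter
    (fun i => w[i]? = some x ∧ w[(i + 1)]? = some y)).card

/-- Number of occurrences of the factor `xy` in the word `w` whose starting height
(the height after the first `i` steps, the factor occupying positions `i` and `i+1`,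
`0`-indexed) is at least `1`. -/
def countFactorHigh (x y : Step) (w : List Step) : ℕ :=
  ((Finset.range w.length).filter
    (fun i => w[i]? = some x ∧ w[(i + 1)]? = some y ∧ 1 ≤ height (w.take i))).card

/-- The number of edges of the Hasse diagram of the Dyck lattice `D_n`,
i.e. the number of covering pairs of Dyck paths of semilength `n`. -/
noncomputable def dyckEdges (n : ℕ) : ℕ :=
  Nat.card {p : List Step × List Step // Covers (IsDyck n) p.1 p.2}

/-! ### basic lemmas -/

@[simp] lemma height_nil : height ([] : List Step) = 0 := rfl

lemma height_append (a b : List Step) : height (a ++ b) = height a + height b := by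
  simp [height, List.count_append]; ring

@[simp] lemma height_U : height [Step.U] = 1 := by decide
@[simp] lemma height_D : height [Step.D] = -1 := by decide

lemma count_U_add_count_D (w : List Step) : w.count Step.U + w.count Step.D = w.length := by
  induction w with
  | nil => simp
  | cons a l ih => cases a <;> simp [List.count_cons] <;> omega

lemma height_eq (w : List Step) : height w = 2 * (w.count Step.U : ℤ) - w.length := by
  have := count_U_add_count_D w
  simp only [height]; omega

lemma height_take_succ_U {w : List Step} {i : ℕ} (h : w[i]? = some Step.U) :
    height (w.take (i+1)) = height (w.take i) + 1 := by
  rw [List.take_succ, h, height_append]; simp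

lemma height_take_succ_D {w : List Step} {i : ℕ} (h : w[i]? = some Step.D) :
    height (w.take (i+1)) = height (w.take i) - 1 := by
  rw [List.take_succ, h, height_append]; simp; ring

lemma lt_length_of_get? {w : List Step} {i : ℕ} {a : Step} (h : w[i]? = some a) :
    i < w.length := by
  exact (List.getElem?_eq_some_iff.mp h).1

lemma get?_cases {w : List Step} {i : ℕ} (h : i < w.length) :
    w[i]? = some Step.U ∨ w[i]? = some Step.D := by
  rw [List.getElem?_eq_getElem h]
  cases w[i] <;> simp

lemma height_step {w : List Step} {i : ℕ} (h : i < w.length) :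
    height (w.take (i+1)) = height (w.take i) + 1 ∨
    height (w.take (i+1)) = height (w.take i) - 1 := by
  rcases get?_cases h with h' | h'
  · exact Or.inl (height_take_succ_U h')
  · exact Or.inr (height_take_succ_D h')

lemma eq_of_height_take_eq {w z : List Step} (hl : w.length = z.length)
    (h : ∀ j, height (w.take j) = height (z.take j)) : w = z := by
  apply List.ext_getElem?
  intro i
  rcases Nat.lt_or_ge i w.length with hi | hi
  · have hiz : i < z.length := hl ▸ hi
    rcases get?_cases hi with h1 | h1 <;> rcases get?_cases hiz with h2 | h2 <;>
      rw [h1, h2] <;> first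
      | rfl
      | (exfalso
         first
         | (have e1 := height_take_succ_U h1
            have e2 := height_take_succ_D h2
            have := h i; have := h (i+1); omega)
         | (have e1 := height_take_succ_D h1
            have e2 := height_take_succ_U h2
            have := h i; have := h (i+1); omega))
  · rw [List.getElem?_eq_none hi,
      List.getElem?_eq_none (hl ▸ hi)]

lemma eq_take_append_drop {w : List Step} {i : ℕ} {a b : Step}
    (ha : w[i]? = some a) (hb : w[(i+1)]? = some b) :
    w = w.take i ++ [a, b] ++ w.drop (i+2) := by
  have hi : i < w.length := lt_length_of_get? ha
  have hi1 : i + 1 < w.length := lt_length_of_get? hb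
  rw [List.getElem?_eq_getElem hi] at ha
  rw [List.getElem?_eq_getElem hi1] at hb
  have d1 : w.drop i = w[i] :: w.drop (i+1) := List.drop_eq_getElem_cons hi
  have d2 : w.drop (i+1) = w[i+1] :: w.drop (i+2) := List.drop_eq_getElem_cons hi1
  conv_lhs => rw [← List.take_append_drop i w]
  rw [d1, d2]
  simp only [Option.some.injEq] at ha hb
  rw [ha, hb]
  simp

lemma height_take_append (a b : List Step) (j : ℕ) :
    height ((a ++ b).take j) = height (a.take j) + height (b.take (j - a.length)) := by
  rw [List.take_append, height_append]

lemma height_take_pair (x y : Step) (m : ℕ) :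
    height (([x, y] : List Step).take m) =
      if m = 0 then 0 else if m = 1 then height [x] else height [x] + height [y] := by
  match m with
  | 0 => simp
  | 1 => simp [height_append]
  | (m+2) =>
    have h2 : ([x, y] : List Step).take (m+2) = [x, y] := by
      apply List.take_of_length_le; simp
    have h3 : ([x, y] : List Step) = [x] ++ [y] := rfl
    rw [h2, h3, height_append]
    simp

lemma height_take_drop (q : List Step) (k m : ℕ) :
    height (q.take (k + m)) = height (q.take k) + height ((q.drop k).take m) := by
  rw [List.take_add, height_append]

lemma take_of_full {w : List Step} {n j : ℕ} (hw : IsDyck n w) (h : 2 * n ≤ j) :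
    height (w.take j) = 0 := by
  rw [List.take_of_length_le (by rw [hw.1]; omega)]
  have h1 := hw.2.1
  have h2 := count_U_add_count_D w
  have h3 := hw.1
  rw [height_eq]; omega

/-! ### vflip -/

def vflip (w : List Step) (i : ℕ) : List Step :=
  w.take i ++ [Step.U, Step.D] ++ w.drop (i+2)

section Flip

variable {n : ℕ} {w : List Step} {i : ℕ}
  (hD : w[i]? = some Step.D) (hU : w[(i+1)]? = some Step.U)

include hD hU

lemma flip_length : (vflip w i).length = w.length := by
  conv_rhs => rw [eq_take_append_drop hD hU]
  simp [vflip]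

lemma flip_count_U : (vflip w i).count Step.U = w.count Step.U := by
  conv_rhs => rw [eq_take_append_drop hD hU]
  simp [vflip, List.count_append]

lemma flip_height (j : ℕ) :
    height ((vflip w i).take j) = height (w.take j) + (if j = i + 1 then 2 else 0) := by
  have hi1 : i + 1 < w.length := lt_length_of_get? hU
  have hlen : (w.take i).length = i := by
    rw [List.length_take]; omega
  conv_rhs => rw [eq_take_append_drop hD hU]
  rw [vflip, List.append_assoc, List.append_assoc, height_take_append, height_take_append,
    height_take_append, height_take_append, hlen, height_take_pair, height_take_pair]
  have hp2 : ([Step.D, Step.U] : List Step).length = 2 := rfl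
  have hp2' : ([Step.U, Step.D] : List Step).length = 2 := rfl
  rw [hp2, hp2']
  simp only [height_U, height_D]
  split_ifs <;> omega

lemma IsDyck.vflip (hw : IsDyck n w) : IsDyck n (vflip w i) := by
  refine ⟨?_, ?_, ?_⟩
  · rw [flip_length hD hU, hw.1]
  · rw [flip_count_U hD hU, hw.2.1]
  · intro j
    rw [flip_height hD hU j]
    have := hw.2.2 j
    split_ifs <;> omega

lemma flip_pathLt : PathLt w (vflip w i) := by
  constructor
  · intro j
    rw [flip_height hD hU j]
    split_ifs <;> omega
  · intro hle
    have := hle (i+1)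
    rw [flip_height hD hU (i+1)] at this
    simp at this

end Flip

lemma flip_inj {w : List Step} {i i' : ℕ}
    (hD : w[i]? = some Step.D) (hU : w[(i+1)]? = some Step.U)
    (hD' : w[i']? = some Step.D) (hU' : w[(i'+1)]? = some Step.U)
    (h : vflip w i = vflip w i') : i = i' := by
  by_contra hne
  have h1 := flip_height hD hU (i+1)
  have h2 := flip_height hD' hU' (i+1)
  rw [h] at h1
  rw [h1] at h2
  simp at h2
  exact hne h2

/-- backward direction: a valley vflip is a covering. -/
lemma covers_of_valley {n : ℕ} {w : List Step} {i : ℕ} (hw : IsDyck n w)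
    (hD : w[i]? = some Step.D) (hU : w[(i+1)]? = some Step.U) :
    Covers (IsDyck n) w (vflip w i) := by
  refine ⟨hw, hw.vflip hD hU, flip_pathLt hD hU, ?_⟩
  rintro z hz ⟨⟨hle1, hnle1⟩, ⟨hle2, hnle2⟩⟩
  have hi1 : i + 1 < w.length := lt_length_of_get? hU
  have hzl : z.length = w.length := by rw [hz.1, hw.1]
  -- heights of z agree with w except possibly at i+1
  have hag : ∀ j, j ≠ i + 1 → height (z.take j) = height (w.take j) := by
    intro j hj
    have := hle1 j
    have h2 := hle2 j
    rw [flip_height hD hU j, if_neg hj] at h2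
    omega
  have hstepz := height_step (w := z) (i := i) (by omega)
  have hDi : height (w.take (i+1)) = height (w.take i) - 1 := height_take_succ_D hD
  have hzi : height (z.take i) = height (w.take i) := hag i (by omega)
  rcases hstepz with hzs | hzs
  · -- z agrees with vflip w i everywhere
    have : z = vflip w i := by
      apply eq_of_height_take_eq (by rw [hzl, flip_length hD hU])
      intro j
      rw [flip_height hD hU j]
      by_cases hj : j = i + 1
      · subst hj; rw [hzs, hzi]; simp; omega
      · rw [hag j hj, if_neg hj]; omega
    rw [this] at hnle2
    exact hnle2 (fun _ => le_refl _)
  · -- z agrees with w everywhere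
    have : z = w := by
      apply eq_of_height_take_eq hzl
      intro j
      by_cases hj : j = i + 1
      · subst hj; omega
      · exact hag j hj
    rw [this] at hnle1
    exact hnle1 (fun _ => le_refl _)

/-- parity: heights of equal-length words at the same index differ by an even number. -/
lemma height_parity {w z : List Step} (hl : w.length = z.length) (j : ℕ) :
    ∃ k : ℤ, height (z.take j) - height (w.take j) = 2 * k := by
  refine ⟨(((z.take j).count Step.U : ℤ) - ((w.take j).count Step.U : ℤ)), ?_⟩
  rw [height_eq, height_eq]
  have : (w.take j).length = (z.take j).length := by
    rw [List.length_take, List.length_take, hl]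
  omega

/-- forward direction: a covering pair comes from a valley flip. -/
lemma covers_to_valley {n : ℕ} {w w' : List Step} (hc : Covers (IsDyck n) w w') :
    ∃ i, w[i]? = some Step.D ∧ w[(i+1)]? = some Step.U ∧ w' = vflip w i := by
  obtain ⟨hw, hw', ⟨hle, hnle⟩, hmid⟩ := hc
  have hlw : w.length = 2 * n := hw.1
  have hlw' : w'.length = 2 * n := hw'.1
  have hll : w.length = w'.length := by omega
  -- the set of indices where heights differ
  classical
  set D : Finset ℕ := (Finset.range (2*n+1)).filter
      (fun j => height (w.take j) < height (w'.take j)) with hDdef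
  have hmemD : ∀ j, j ∈ D ↔ j ≤ 2*n ∧ height (w.take j) < height (w'.take j) := by
    intro j
    simp [hDdef, Nat.lt_succ_iff]
  have hne : D.Nonempty := by
    rw [PathLe] at hnle
    push_neg at hnle
    obtain ⟨j, hj⟩ := hnle
    refine ⟨j, (hmemD j).mpr ⟨?_, hj⟩⟩
    by_contra hbig
    rw [take_of_full hw (by omega), take_of_full hw' (by omega)] at hj
    omega
  obtain ⟨m, hmD, hmin⟩ := Finset.exists_min_image D (fun j => height (w.take j)) hne
  rw [hmemD] at hmD
  obtain ⟨hm2n, hmlt⟩ := hmD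
  have hm0 : m ≠ 0 := by
    intro h; rw [h] at hmlt; simp at hmlt
  have hm2n' : m ≠ 2*n := by
    intro h
    rw [h, take_of_full hw (le_refl _), take_of_full hw' (le_refl _)] at hmlt
    omega
  -- the letter of w at position m-1 is D
  have hm1lt : m - 1 < w.length := by omega
  have hDm : w[(m-1)]? = some Step.D := by
    rcases get?_cases hm1lt with hl1 | hl1
    · exfalso
      have e1 := height_take_succ_U hl1
      rw [show m - 1 + 1 = m by omega] at e1
      -- then m-1 is also a difference index with smaller height
      have hstep' := height_step (w := w') (i := m - 1) (by omega)
      rw [show m - 1 + 1 = m by omega] at hstep'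
      have hmem : m - 1 ∈ D := by
        rw [hmemD]
        constructor
        · omega
        · omega
      have := hmin (m-1) hmem
      omega
    · exact hl1
  -- the letter of w at position m is U
  have hmlt2 : m < w.length := by omega
  have hUm : w[m]? = some Step.U := by
    rcases get?_cases hmlt2 with hl1 | hl1
    · exact hl1
    · exfalso
      have e1 := height_take_succ_D hl1
      have hstep' := height_step (w := w') (i := m) (by omega)
      have hmem : m + 1 ∈ D := by
        rw [hmemD]
        constructor
        · omega
        · omega
      have := hmin (m+1) hmem
      omega
  -- now flip
  have hm11 : m - 1 + 1 = m := by omega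
  have hDm' := hDm
  have hUm' : w[(m - 1 + 1)]? = some Step.U := by rw [hm11]; exact hUm
  refine ⟨m - 1, hDm, hUm', ?_⟩
  set z := vflip w (m-1) with hz
  have hzd : IsDyck n z := hw.vflip hDm hUm'
  have hltz : PathLt w z := flip_pathLt hDm hUm'
  -- z ≤ w'
  have hzle : PathLe z w' := by
    intro j
    rw [hz, flip_height hDm hUm' j, hm11]
    by_cases hj : j = m
    · rw [if_pos hj, hj]
      obtain ⟨k, hk⟩ := height_parity hll m
      omega
    · rw [if_neg hj]
      simpa using hle j
  have := hmid z hzd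
  have hwz' : PathLe w' z := by
    by_contra hnn
    exact this ⟨hltz, hzle, hnn⟩
  -- z = w'
  have : z = w' := by
    apply eq_of_height_take_eq _ (fun j => le_antisymm (hzle j) (hwz' j))
    rw [hz, flip_length hDm hUm', hll]
  exact this.symm

/-! ### Finsets of words -/

def allLists : ℕ → Finset (List Step)
  | 0 => {[]}
  | m+1 => (allLists m).biUnion (fun l => {Step.U :: l, Step.D :: l})

lemma mem_allLists : ∀ (m : ℕ) (w : List Step), w ∈ allLists m ↔ w.length = m := by
  intro m
  induction m with
  | zero => intro w; simp [allLists, List.length_eq_zero_iff]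
  | succ m ih =>
    intro w
    cases w with
    | nil =>
      simp only [allLists, Finset.mem_biUnion, Finset.mem_insert, Finset.mem_singleton]
      constructor
      · rintro ⟨l, -, h | h⟩ <;> simp at h
      · intro h; simp at h
    | cons a l =>
      simp only [allLists, Finset.mem_biUnion, Finset.mem_insert, Finset.mem_singleton,
        List.length_cons]
      constructor
      · rintro ⟨l', hl', h | h⟩ <;> (cases h; rw [ih] at hl'; omega)
      · intro h
        refine ⟨l, (ih l).mpr (by omega), ?_⟩
        cases a
        · left; rfl
        · right; rfl

open Classical in
noncomputable def dyckFinset (n : ℕ) : Finset (List Step) :=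
  (allLists (2*n)).filter (fun w => IsDyck n w)

lemma mem_dyckFinset {n : ℕ} {w : List Step} : w ∈ dyckFinset n ↔ IsDyck n w := by
  classical
  simp only [dyckFinset, Finset.mem_filter, mem_allLists]
  constructor
  · exact fun h => by convert h.2
  · intro h; exact ⟨h.1, by convert h⟩

def valleyFinset (w : List Step) : Finset ℕ :=
  (Finset.range w.length).filter
    (fun i => w[i]? = some Step.D ∧ w[(i + 1)]? = some Step.U)

lemma countFactor_DU_eq (w : List Step) :
    countFactor Step.D Step.U w = (valleyFinset w).card := rfl

noncomputable def edgeFinset (n : ℕ) : Finset ((_ : List Step) × ℕ) :=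
  (dyckFinset n).sigma (fun w => valleyFinset w)

lemma mem_valleyFinset {w : List Step} {i : ℕ} :
    i ∈ valleyFinset w ↔ w[i]? = some Step.D ∧ w[(i+1)]? = some Step.U := by
  simp only [valleyFinset, Finset.mem_filter, Finset.mem_range]
  constructor
  · exact fun h => h.2
  · intro h; exact ⟨lt_length_of_get? h.1, h⟩

lemma dyckEdges_eq_card (n : ℕ) : dyckEdges n = (edgeFinset n).card := by
  rw [dyckEdges, ← Nat.card_eq_finsetCard]
  apply Nat.card_congr
  apply Equiv.symm
  refine Equiv.ofBijective
    (fun x => ⟨(x.1.1, vflip x.1.1 x.1.2), ?_⟩) ⟨?_, ?_⟩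
  · obtain ⟨⟨w, i⟩, hx⟩ := x
    simp only [edgeFinset, Finset.mem_sigma] at hx
    obtain ⟨hw, hi⟩ := hx
    rw [mem_dyckFinset] at hw
    rw [mem_valleyFinset] at hi
    exact covers_of_valley hw hi.1 hi.2
  · rintro ⟨⟨w, i⟩, hx⟩ ⟨⟨v, j⟩, hy⟩ h
    simp only [Subtype.mk.injEq, Prod.mk.injEq] at h
    obtain ⟨h1, h2⟩ := h
    subst h1
    simp only [edgeFinset, Finset.mem_sigma, mem_valleyFinset] at hx hy
    have := flip_inj hx.2.1 hx.2.2 hy.2.1 hy.2.2 h2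
    simp [this]
  · rintro ⟨⟨w, w'⟩, hc⟩
    obtain ⟨i, hD, hU, hf⟩ := covers_to_valley hc
    have hw : IsDyck n w := hc.1
    refine ⟨⟨⟨w, i⟩, ?_⟩, ?_⟩
    · simp only [edgeFinset, Finset.mem_sigma, mem_dyckFinset, mem_valleyFinset]
      exact ⟨hw, hD, hU⟩
    · simp only [Subtype.mk.injEq, Prod.mk.injEq]
      exact ⟨trivial, hf.symm⟩

lemma dyckEdges_eq_sum (n : ℕ) :
    dyckEdges n = ∑ w ∈ dyckFinset n, countFactor Step.D Step.U w := by
  rw [dyckEdges_eq_card, edgeFinset, Finset.card_sigma]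
  exact Finset.sum_congr rfl (fun w _ => (countFactor_DU_eq w).symm)

/-! ### counting Dyck words: catalan -/

def toD : Step → DyckStep
  | Step.U => DyckStep.U
  | Step.D => DyckStep.D

def ofD : DyckStep → Step
  | DyckStep.U => Step.U
  | DyckStep.D => Step.D

lemma toD_inj : Function.Injective toD := by
  intro a b h; cases a <;> cases b <;> simp [toD] at h ⊢

lemma ofD_inj : Function.Injective ofD := by
  intro a b h; cases a <;> cases b <;> simp [ofD] at h ⊢

@[simp] lemma ofD_toD (w : List Step) : (w.map toD).map ofD = w := by
  rw [List.map_map]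
  have : (ofD ∘ toD) = id := by funext a; cases a <;> rfl
  rw [this, List.map_id]

@[simp] lemma toD_ofD (w : List DyckStep) : (w.map ofD).map toD = w := by
  rw [List.map_map]
  have : (toD ∘ ofD) = id := by funext a; cases a <;> rfl
  rw [this, List.map_id]

lemma card_isDyck (n : ℕ) : Nat.card {w : List Step // IsDyck n w} = catalan n := by
  rw [← DyckWord.card_dyckWord_semilength_eq_catalan n, ← Nat.card_eq_fintype_card]
  apply Nat.card_congr
  refine
    { toFun := fun x => ⟨⟨x.1.map toD, ?_, ?_⟩, ?_⟩
      invFun := fun p => ⟨p.1.toList.map ofD, ?_, ?_, ?_⟩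
      left_inv := ?_
      right_inv := ?_ }
  · -- count U = count D in image
    obtain ⟨w, hw⟩ := x
    have h1 : (w.map toD).count DyckStep.U = w.count Step.U :=
      List.count_map_of_injective w toD toD_inj Step.U
    have h2 : (w.map toD).count DyckStep.D = w.count Step.D :=
      List.count_map_of_injective w toD toD_inj Step.D
    have h3 := count_U_add_count_D w
    rw [h1, h2]
    have h4 := hw.2.1
    have := hw.1
    omega
  · -- prefix condition
    intro i
    obtain ⟨w, hw⟩ := x
    have hp := hw.2.2 i
    rw [← List.map_take]
    have h1 : ((w.take i).map toD).count DyckStep.U = (w.take i).count Step.U :=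
      List.count_map_of_injective (w.take i) toD toD_inj Step.U
    have h2 : ((w.take i).map toD).count DyckStep.D = (w.take i).count Step.D :=
      List.count_map_of_injective (w.take i) toD toD_inj Step.D
    rw [h1, h2]
    rw [height] at hp
    omega
  · -- semilength
    obtain ⟨w, hw⟩ := x
    show (w.map toD).count DyckStep.U = n
    have h1 : (w.map toD).count DyckStep.U = w.count Step.U :=
      List.count_map_of_injective w toD toD_inj Step.U
    rw [h1, hw.2.1]
  · -- length
    obtain ⟨p, hp⟩ := p
    rw [List.length_map, ← DyckWord.two_mul_semilength_eq_length, hp]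
  · -- count U
    obtain ⟨p, hp⟩ := p
    have h1 : (p.toList.map ofD).count Step.U = p.toList.count DyckStep.U :=
      List.count_map_of_injective p.toList ofD ofD_inj DyckStep.U
    rw [h1]
    exact hp
  · -- prefix heights
    intro i
    obtain ⟨p, hp⟩ := p
    rw [← List.map_take, height]
    have h1 : ((p.toList.take i).map ofD).count Step.U = (p.toList.take i).count DyckStep.U :=
      List.count_map_of_injective (p.toList.take i) ofD ofD_inj DyckStep.U
    have h2 : ((p.toList.take i).map ofD).count Step.D = (p.toList.take i).count DyckStep.D :=
      List.count_map_of_injective (p.toList.take i) ofD ofD_inj DyckStep.D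
    have h3 := p.count_D_le_count_U i
    rw [h1, h2]
    omega
  · rintro ⟨w, hw⟩
    apply Subtype.ext
    show ((w.map toD).map ofD) = w
    rw [List.map_map]
    have h : (ofD ∘ toD) = id := funext fun a => by cases a <;> rfl
    rw [h, List.map_id]
  · rintro ⟨p, hp⟩
    apply Subtype.ext
    apply DyckWord.ext
    show ((p.toList.map ofD).map toD) = p.toList
    rw [List.map_map]
    have h : (toD ∘ ofD) = id := funext fun a => by cases a <;> rfl
    rw [h, List.map_id]

lemma card_dyckFinset (n : ℕ) : (dyckFinset n).card = catalan n := by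
  rw [← Nat.card_eq_finsetCard, ← card_isDyck n]
  exact Nat.card_congr (Equiv.subtypeEquivRight (fun w => mem_dyckFinset))

/-! ### per-path identity: peaks = valleys + 1 -/

def cf (x y : Step) : List Step → ℕ
  | [] => 0
  | a :: l => cf x y l + (if a = x ∧ l[0]? = some y then 1 else 0)

lemma countFactor_cons (x y a : Step) (l : List Step) :
    countFactor x y (a :: l) =
      (if a = x ∧ l[0]? = some y then 1 else 0) + countFactor x y l := by
  unfold countFactor
  rw [List.length_cons, Finset.card_filter, Finset.card_filter, Finset.sum_range_succ']
  rw [add_comm]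
  congr 1
  simp only [List.getElem?_cons_zero, List.getElem?_cons_succ, Option.some.injEq]

lemma countFactor_eq_cf (x y : Step) (w : List Step) : countFactor x y w = cf x y w := by
  induction w with
  | nil => rfl
  | cons a l ih =>
    rw [countFactor_cons, cf, ih, Nat.add_comm]

lemma cf_sub (w : List Step) :
    (cf Step.U Step.D w : ℤ) - (cf Step.D Step.U w : ℤ) =
      (if w.head? = some Step.U then 1 else 0) -
      (if w.getLast? = some Step.U then 1 else 0) := by
  induction w with
  | nil => simp [cf]
  | cons a l ih =>
    cases l with
    | nil => cases a <;> simp [cf]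
    | cons b t =>
      have e1 : cf Step.U Step.D (a :: b :: t) =
          cf Step.U Step.D (b :: t) + (if a = Step.U ∧ b = Step.D then 1 else 0) := by
        simp [cf]
      have e2 : cf Step.D Step.U (a :: b :: t) =
          cf Step.D Step.U (b :: t) + (if a = Step.D ∧ b = Step.U then 1 else 0) := by
        simp [cf]
      rw [e1, e2, List.getLast?_cons_cons, List.head?_cons]
      have hh : (b :: t).head? = some b := rfl
      rw [hh] at ih
      push_cast
      cases a <;> cases b <;> simp at ih ⊢ <;> omega

lemma IsDyck.head?_eq {n : ℕ} {w : List Step} (hw : IsDyck n w) (hn : 1 ≤ n) :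
    w.head? = some Step.U := by
  cases w with
  | nil => exfalso; have := hw.1; simp at this; omega
  | cons a l =>
    cases a
    · rfl
    · exfalso
      have h1 := hw.2.2 1
      have h2 : (Step.D :: l).take 1 = [Step.D] := rfl
      rw [h2, height_D] at h1
      omega

lemma IsDyck.getLast?_eq {n : ℕ} {w : List Step} (hw : IsDyck n w) (hn : 1 ≤ n) :
    w.getLast? = some Step.D := by
  have hlen : w.length = 2*n := hw.1
  have hlpos : 0 < w.length := by omega
  rw [List.getLast?_eq_getElem?]
  have hfull : height (w.take (2*n)) = 0 := take_of_full hw (le_refl _)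
  have hfull' : height (w.take (2*n - 1)) ≥ 0 := hw.2.2 _
  rcases get?_cases (show w.length - 1 < w.length by omega) with h | h
  · exfalso
    have := height_take_succ_U h
    rw [hlen] at this
    rw [show 2*n - 1 + 1 = 2*n by omega] at this
    omega
  · rw [hlen] at h ⊢; exact h

lemma peak_count {n : ℕ} {w : List Step} (hw : IsDyck n w) (hn : 1 ≤ n) :
    countFactor Step.U Step.D w = countFactor Step.D Step.U w + 1 := by
  have h1 := cf_sub w
  rw [hw.head?_eq hn, hw.getLast?_eq hn] at h1
  simp at h1
  rw [countFactor_eq_cf, countFactor_eq_cf]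
  omega

/-! ### peak insertion and erasure -/

def insUD (q : List Step) (k : ℕ) : List Step :=
  q.take k ++ [Step.U, Step.D] ++ q.drop k

lemma ins_height (q : List Step) (k : ℕ) (hk : k ≤ q.length) (j : ℕ) :
    height ((insUD q k).take j) =
      if j ≤ k then height (q.take j)
      else if j = k + 1 then height (q.take k) + 1
      else height (q.take (j - 2)) := by
  have hlen : (q.take k).length = k := by rw [List.length_take]; omega
  rw [insUD, List.append_assoc, height_take_append, height_take_append, hlen]
  have hp : ([Step.U, Step.D] : List Step).length = 2 := rfl
  rw [hp, List.take_take, height_take_pair]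
  rw [show j - k - 2 = j - 2 - k by omega]
  rcases le_or_gt j k with h | h
  · rw [min_eq_left h, if_pos h, show j - k = 0 by omega, show j - 2 - k = 0 by omega]
    simp
  · rw [min_eq_right (by omega : k ≤ j), if_neg (show ¬ j ≤ k by omega)]
    by_cases h1 : j = k + 1
    · rw [if_pos h1, show j - 2 - k = 0 by omega, show j - k = 1 by omega]
      simp
    · have e := height_take_drop q k (j - 2 - k)
      rw [show k + (j - 2 - k) = j - 2 by omega] at e
      rw [if_neg h1]
      rw [if_neg (show ¬ (j - k = 0) by omega), if_neg (show ¬ (j - k = 1) by omega)]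
      simp only [height_U, height_D]
      omega

lemma ins_length (q : List Step) (k : ℕ) : (insUD q k).length = q.length + 2 := by
  simp [insUD]
  have : min k q.length + (2 + (q.length - k)) = 2 + (min k q.length + (q.length - k)) := by omega
  omega

lemma ins_count_U (q : List Step) (k : ℕ) :
    (insUD q k).count Step.U = q.count Step.U + 1 := by
  rw [insUD, List.count_append, List.count_append]
  have : (q.take k).count Step.U + (q.drop k).count Step.U = q.count Step.U := by
    rw [← List.count_append, List.take_append_drop]
  simp [List.count_cons]
  omega

lemma ins_isDyck {m : ℕ} {q : List Step} (hq : IsDyck m q) {k : ℕ} (hk : k ≤ q.length) :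
    IsDyck (m+1) (insUD q k) := by
  refine ⟨?_, ?_, ?_⟩
  · rw [ins_length, hq.1]; ring
  · rw [ins_count_U, hq.2.1]
  · intro j
    rw [ins_height q k hk j]
    have h1 := hq.2.2 j
    have h2 := hq.2.2 (j - 2)
    have h3 := hq.2.2 k
    split_ifs <;> omega

lemma ins_get?_U {q : List Step} {k : ℕ} (hk : k ≤ q.length) :
    (insUD q k)[k]? = some Step.U := by
  have hlen : (q.take k).length = k := by rw [List.length_take]; omega
  rw [insUD, List.append_assoc,
    List.getElem?_append_right (by omega : (q.take k).length ≤ k), hlen]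
  simp

lemma ins_get?_D {q : List Step} {k : ℕ} (hk : k ≤ q.length) :
    (insUD q k)[(k+1)]? = some Step.D := by
  have hlen : (q.take k).length = k := by rw [List.length_take]; omega
  rw [insUD, List.append_assoc,
    List.getElem?_append_right (by omega : (q.take k).length ≤ k+1), hlen]
  simp

lemma erase_ins (q : List Step) (k : ℕ) (hk : k ≤ q.length) :
    (insUD q k).take k ++ (insUD q k).drop (k+2) = q := by
  have hlen : (q.take k).length = k := by rw [List.length_take]; omega
  have t1 : (insUD q k).take k = q.take k := by
    rw [insUD, List.append_assoc, List.take_append, hlen,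
      List.take_take, min_self, Nat.sub_self]
    simp
  have t2 : (insUD q k).drop (k+2) = q.drop k := by
    have hl2 : (q.take k ++ [Step.U, Step.D]).length = k + 2 := by
      rw [List.length_append, hlen]; rfl
    rw [insUD, show k + 2 = (q.take k ++ [Step.U, Step.D]).length + 0 by rw [hl2],
      List.drop_length_add_append]
    rfl
  rw [t1, t2, List.take_append_drop]

lemma ins_erase {w : List Step} {i : ℕ} (hU : w[i]? = some Step.U)
    (hD : w[(i+1)]? = some Step.D) :
    insUD (w.take i ++ w.drop (i+2)) i = w := by
  have hi1 : i + 1 < w.length := lt_length_of_get? hD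
  have hlen : (w.take i).length = i := by rw [List.length_take]; omega
  have t1 : (w.take i ++ w.drop (i+2)).take i = w.take i := by
    rw [List.take_append, List.take_take, min_self, hlen, Nat.sub_self]
    simp
  have t2 : (w.take i ++ w.drop (i+2)).drop i = w.drop (i+2) := by
    rw [List.drop_append, hlen, Nat.sub_self]
    simp
  rw [insUD, t1, t2]
  exact (eq_take_append_drop hU hD).symm

lemma erase_height {w : List Step} {i : ℕ} (hU : w[i]? = some Step.U)
    (hD : w[(i+1)]? = some Step.D) (j : ℕ) :
    height ((w.take i ++ w.drop (i+2)).take j) =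
      if j ≤ i then height (w.take j) else height (w.take (j + 2)) := by
  have hi1 : i + 1 < w.length := lt_length_of_get? hD
  have hlen : (w.take i).length = i := by rw [List.length_take]; omega
  rw [height_take_append, hlen, List.take_take]
  have hpk : height (w.take (i+2)) = height (w.take i) := by
    have e1 := height_take_succ_U hU
    have e2 := height_take_succ_D hD
    rw [show i+1+1 = i+2 by omega] at e2
    omega
  rcases le_or_gt j i with h | h
  · rw [min_eq_left h, if_pos h, show j - i = 0 by omega]
    simp
  · rw [min_eq_right (by omega : i ≤ j), if_neg (by omega)]
    have e := height_take_drop w (i+2) (j - i)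
    rw [show i + 2 + (j - i) = j + 2 by omega] at e
    omega

lemma erase_isDyck {m : ℕ} {w : List Step} (hw : IsDyck (m+1) w) {i : ℕ}
    (hU : w[i]? = some Step.U) (hD : w[(i+1)]? = some Step.D) :
    IsDyck m (w.take i ++ w.drop (i+2)) := by
  have hi1 : i + 1 < w.length := lt_length_of_get? hD
  have hlw := hw.1
  refine ⟨?_, ?_, ?_⟩
  · rw [List.length_append, List.length_take, List.length_drop, hlw]
    have : i + 1 < 2 * (m + 1) := by omega
    omega
  · have hdec := eq_take_append_drop hU hD
    have := hw.2.1
    rw [hdec] at this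
    rw [List.count_append, List.count_append] at this
    simp [List.count_cons] at this
    rw [List.count_append]
    omega
  · intro j
    rw [erase_height hU hD j]
    have h1 := hw.2.2 j
    have h2 := hw.2.2 (j + 2)
    split_ifs <;> omega

/-! ### sum of peaks -/

def peakFinset (w : List Step) : Finset ℕ :=
  (Finset.range w.length).filter
    (fun i => w[i]? = some Step.U ∧ w[(i + 1)]? = some Step.D)

lemma countFactor_UD_eq (w : List Step) :
    countFactor Step.U Step.D w = (peakFinset w).card := rfl

lemma mem_peakFinset {w : List Step} {i : ℕ} :
    i ∈ peakFinset w ↔ w[i]? = some Step.U ∧ w[(i+1)]? = some Step.D := by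
  simp only [peakFinset, Finset.mem_filter, Finset.mem_range]
  exact ⟨fun h => h.2, fun h => ⟨lt_length_of_get? h.1, h⟩⟩

lemma sum_peaks (m : ℕ) :
    ∑ w ∈ dyckFinset (m+1), countFactor Step.U Step.D w = catalan m * (2*m+1) := by
  have h0 : ∑ w ∈ dyckFinset (m+1), countFactor Step.U Step.D w
      = ((dyckFinset (m+1)).sigma peakFinset).card := by
    rw [Finset.card_sigma]
    exact Finset.sum_congr rfl (fun w _ => countFactor_UD_eq w)
  rw [h0, ← card_dyckFinset m, ← Finset.card_range (2*m+1), ← Finset.card_product]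
  apply Finset.card_bij (fun x _ => (x.1.take x.2 ++ x.1.drop (x.2+2), x.2))
  · -- maps into target
    rintro ⟨w, i⟩ hx
    simp only [Finset.mem_sigma, mem_dyckFinset, mem_peakFinset] at hx
    obtain ⟨hw, hU, hD⟩ := hx
    have hi1 : i + 1 < w.length := lt_length_of_get? hD
    simp only [Finset.mem_product, mem_dyckFinset, Finset.mem_range]
    constructor
    · exact erase_isDyck hw hU hD
    · have := hw.1; omega
  · -- injective
    rintro ⟨w, i⟩ hx ⟨v, j⟩ hy h
    simp only [Finset.mem_sigma, mem_dyckFinset, mem_peakFinset] at hx hy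
    simp only [Prod.mk.injEq] at h
    obtain ⟨h1, h2⟩ := h
    subst h2
    have hwv : w = v := by
      rw [← ins_erase hx.2.1 hx.2.2, ← ins_erase hy.2.1 hy.2.2, h1]
    subst hwv
    rfl
  · -- surjective
    rintro ⟨q, k⟩ hqk
    simp only [Finset.mem_product, mem_dyckFinset, Finset.mem_range] at hqk
    obtain ⟨hq, hk⟩ := hqk
    have hk' : k ≤ q.length := by rw [hq.1]; omega
    refine ⟨⟨insUD q k, k⟩, ?_, ?_⟩
    · simp only [Finset.mem_sigma, mem_dyckFinset, mem_peakFinset]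
      exact ⟨ins_isDyck hq hk', ins_get?_U hk', ins_get?_D hk'⟩
    · simp only [Prod.mk.injEq]
      exact ⟨erase_ins q k hk', trivial⟩

/-! ### final assembly -/

lemma catalan_pos' (n : ℕ) : 0 < catalan n := by
  have h1 := succ_mul_catalan_eq_centralBinom n
  have h2 := Nat.centralBinom_pos n
  rcases Nat.eq_zero_or_pos (catalan n) with h | h
  · rw [h, Nat.mul_zero] at h1; omega
  · exact h

lemma catalan_rec (m : ℕ) : (m+2) * catalan (m+1) = 2 * (2*m+1) * catalan m := by
  apply Nat.eq_of_mul_eq_mul_left (show 0 < m + 1 by omega)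
  calc (m+1) * ((m+2) * catalan (m+1)) = (m+1+1) * catalan (m+1) * (m+1) := by ring
  _ = Nat.centralBinom (m+1) * (m+1) := by rw [succ_mul_catalan_eq_centralBinom]
  _ = (m+1) * Nat.centralBinom (m+1) := by ring
  _ = 2 * (2*m+1) * Nat.centralBinom m := Nat.succ_mul_centralBinom_succ m
  _ = 2 * (2*m+1) * ((m+1) * catalan m) := by rw [succ_mul_catalan_eq_centralBinom]
  _ = (m+1) * (2 * (2*m+1) * catalan m) := by ring

/-- For `n ≥ 1`, twice the number of edges of the Hasse diagram of the Dyck lattice `D_n`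
equals `(n-1)` times the `n`-th Catalan number; equivalently, the Hasse index of `D_n`
(number of edges divided by number of vertices) is exactly `(n-1)/2`. -/
theorem dyckEdges_hasse_index (n : ℕ) (hn : 1 ≤ n) :
    2 * dyckEdges n = (n - 1) * catalan n ∧
    (dyckEdges n : ℚ) / (Nat.card {w : List Step // IsDyck n w} : ℚ) = ((n : ℚ) - 1) / 2 := by
  obtain ⟨m, rfl⟩ : ∃ m, n = m + 1 := ⟨n - 1, by omega⟩
  have hsum := dyckEdges_eq_sum (m+1)
  -- per-path identity summed
  have hpv : ∑ w ∈ dyckFinset (m+1), countFactor Step.U Step.D w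
      = (∑ w ∈ dyckFinset (m+1), countFactor Step.D Step.U w) + catalan (m+1) := by
    rw [Finset.sum_congr rfl
      (fun w hw => peak_count (mem_dyckFinset.mp hw) (by omega : 1 ≤ m+1))]
    rw [Finset.sum_add_distrib, Finset.sum_const, smul_eq_mul, mul_one, card_dyckFinset]
  have hpk := sum_peaks m
  have hrec := catalan_rec m
  set S := ∑ w ∈ dyckFinset (m+1), countFactor Step.D Step.U w with hS
  have key : 2 * S + 2 * catalan (m+1) = 2 * (catalan m * (2*m+1)) := by omega
  have key2 : 2 * (catalan m * (2*m+1)) = (m+2) * catalan (m+1) := by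
    rw [hrec]; ring
  have key3 : (m+2) * catalan (m+1) = m * catalan (m+1) + 2 * catalan (m+1) := by ring
  have h2 : 2 * dyckEdges (m+1) = m * catalan (m+1) := by
    rw [hsum]
    omega
  constructor
  · simpa using h2
  · rw [card_isDyck]
    have hc : (catalan (m+1) : ℚ) ≠ 0 := by
      have h := catalan_pos' (m+1)
      exact_mod_cast h.ne'
    rw [div_eq_div_iff hc (by norm_num : (2:ℚ) ≠ 0)]
    have hcast : (2 : ℚ) * (dyckEdges (m+1) : ℚ) = (m : ℚ) * (catalan (m+1) : ℚ) := by
      exact_mod_cast congrArg (Nat.cast : ℕ → ℚ) h2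
    push_cast
    ring_nf
    ring_nf at hcast
    linarith
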